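/- Let Q be a lattice of signature (2, m) with m ≥ 1, and let ℓ ⊂ Q ⊗ ℂ be a period (a line with (ℓ,ℓ) = 0 and (ℓ,ℓ̄) > 0). If ℓ is non-special, i.e. (ℓ ⊕ ℓ̄) ∩ Q = 0, then for any nonzero t ∈ ℓ the image of the homomorphism Q → ℂ, z ↦ (t,z), is dense in ℂ. -/

import Mathlib

open Complex

noncomputable def perpF (v : ℂ) : ℂ →ₗ[ℝ] ℝ :=
  v.re • Complex.imLm - v.im • Complex.reLm

lemma perpF_apply (v z : ℂ) : perpF v z = v.re * z.im - v.im * z.re := by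
  simp [perpF, Complex.imLm, Complex.reLm]

lemma perpF_self (v : ℂ) : perpF v v = 0 := by
  rw [perpF_apply]; ring

lemma perpF_Iv (v : ℂ) : perpF v (Complex.I * v) = Complex.normSq v := by
  rw [perpF_apply]; simp [Complex.normSq_apply]

lemma perpF_ker {v u : ℂ} (hv : v ≠ 0) (h : perpF v u = 0) : ∃ s : ℝ, u = s • v := by
  rw [perpF_apply, sub_eq_zero] at h
  by_cases hre : v.re = 0
  · have him : v.im ≠ 0 := by
      intro h'; exact hv (Complex.ext hre h')
    refine ⟨u.im / v.im, ?_⟩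
    apply Complex.ext <;> simp [Complex.real_smul]
    · field_simp
      rw [hre, zero_mul] at h
      rcases mul_eq_zero.mp h.symm with h1 | h1
      · exact absurd h1 him
      · rw [h1, hre]; ring
    · field_simp
  · refine ⟨u.re / v.re, ?_⟩
    apply Complex.ext <;> simp [Complex.real_smul]
    · field_simp
    · field_simp
      rw [mul_comm u.re v.im, ← h]; ring

/-- A subgroup of `ℂ` such that no nonzero real-linear functional maps it into `ℤ`
is dense. -/
lemma dense_addSubgroup_complex (G : AddSubgroup ℂ)
    (hf : ∀ f : ℂ →ₗ[ℝ] ℝ, f ≠ 0 → ∃ g ∈ G, ∀ n : ℤ, f g ≠ (n : ℝ)) :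
    Dense (G : Set ℂ) := by
  set H := G.topologicalClosure with hHdef
  have hGH : ∀ g ∈ G, g ∈ H := fun g hg => G.le_topologicalClosure hg
  have hHc : IsClosed (H : Set ℂ) := G.isClosed_topologicalClosure
  have hHcoe : (H : Set ℂ) = closure (G : Set ℂ) := rfl
  have key : Dense (H : Set ℂ) → Dense (G : Set ℂ) := by
    intro h
    rw [Dense] at h ⊢
    intro x
    have := h x
    rwa [hHcoe, closure_closure] at this
  by_cases hline : ∃ v : ℂ, v ≠ 0 ∧ ∀ r : ℝ, r • v ∈ H
  · obtain ⟨v, hv, hvH⟩ := hline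
    have hnsq : (Complex.normSq v : ℝ) ≠ 0 := by
      simpa using hv
    have hf0 : perpF v ≠ 0 := by
      intro h
      apply hnsq
      rw [← perpF_Iv v, h]; rfl
    set K : AddSubgroup ℝ := H.map (perpF v).toAddMonoidHom with hKdef
    rcases K.dense_or_cyclic with hd | ⟨a, ha⟩
    · -- dense image case: H is dense
      apply key
      set w : ℂ := (Complex.normSq v)⁻¹ • (Complex.I * v) with hwdef
      have hw1 : perpF v w = 1 := by
        rw [hwdef, map_smul, perpF_Iv, smul_eq_mul, inv_mul_cancel₀ hnsq]
      have hwne : w ≠ 0 := by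
        intro h
        rw [h, map_zero] at hw1
        exact one_ne_zero hw1.symm
      have hwpos : 0 < ‖w‖ := by simpa [norm_pos_iff] using hwne
      intro z
      rw [Metric.mem_closure_iff]
      intro ε hε
      have hz : perpF v z ∈ closure (K : Set ℝ) := hd _
      rw [Metric.mem_closure_iff] at hz
      obtain ⟨k, hkK, hkd⟩ := hz (ε / ‖w‖) (div_pos hε hwpos)
      obtain ⟨h, hhH, hhk⟩ := hkK
      set b : ℝ := perpF v z - perpF v h with hbdef
      have hhk' : perpF v h = k := hhk
      have hub : perpF v (z - h - b • w) = 0 := by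
        rw [map_sub, map_sub, map_smul, hw1, smul_eq_mul, mul_one, hbdef]
        ring
      obtain ⟨s, hs⟩ := perpF_ker hv hub
      refine ⟨h + s • v, H.add_mem hhH (hvH s), ?_⟩
      have hzd : z - (h + s • v) = b • w := by
        have : z - h - b • w = s • v := hs
        linear_combination (norm := module) this
      rw [dist_eq_norm, hzd, norm_smul]
      have hbk : |b| = dist (perpF v z) k := by
        rw [dist_eq_norm, Real.norm_eq_abs, hbdef, hhk']
      rw [Real.norm_eq_abs, hbk]
      calc dist (perpF v z) k * ‖w‖ < (ε / ‖w‖) * ‖w‖ := by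
            apply mul_lt_mul_of_pos_right hkd hwpos
        _ = ε := div_mul_cancel₀ ε (ne_of_gt hwpos)
    · -- cyclic image case: contradiction
      exfalso
      by_cases ha0 : a = 0
      · obtain ⟨g, hg, hgn⟩ := hf (perpF v) hf0
        have : perpF v g ∈ K := ⟨g, hGH g hg, rfl⟩
        rw [ha, AddSubgroup.mem_closure_singleton] at this
        obtain ⟨n, hn⟩ := this
        rw [ha0, smul_zero] at hn
        exact hgn 0 (by rw [← hn]; simp)
      · obtain ⟨g, hg, hgn⟩ := hf (a⁻¹ • perpF v) (by
          intro h
          apply hf0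
          ext z
          have := congrFun (congrArg (fun (f : ℂ →ₗ[ℝ] ℝ) => (f : ℂ → ℝ)) h) z
          simp only [LinearMap.smul_apply, smul_eq_mul, LinearMap.zero_apply] at this ⊢
          rcases mul_eq_zero.mp this with h1 | h1
          · exact absurd (inv_eq_zero.mp h1) ha0
          · exact h1)
        have : perpF v g ∈ K := ⟨g, hGH g hg, rfl⟩
        rw [ha, AddSubgroup.mem_closure_singleton] at this
        obtain ⟨n, hn⟩ := this
        apply hgn n
        simp only [LinearMap.smul_apply, smul_eq_mul]
        rw [← hn, zsmul_eq_mul]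
        field_simp
  · exfalso
    push_neg at hline
    -- first: 0 is isolated in H
    have hisol : ∃ ε > 0, ∀ h ∈ H, ‖h‖ < ε → h = 0 := by
      by_contra hc
      push_neg at hc
      have hseq : ∀ n : ℕ, ∃ h ∈ H, ‖h‖ < 1 / (n + 1) ∧ h ≠ 0 := by
        intro n
        obtain ⟨h, hH, hn, hne⟩ := hc (1 / (n + 1)) (by positivity)
        exact ⟨h, hH, hn, hne⟩
      choose h hhH hhn hhne using hseq
      set u : ℕ → ℂ := fun n => ‖h n‖⁻¹ • h n with hudef
      have hu1 : ∀ n, u n ∈ Metric.sphere (0 : ℂ) 1 := by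
        intro n
        simp only [Metric.mem_sphere, dist_zero_right, hudef, norm_smul, norm_inv,
          norm_norm]
        rw [inv_mul_cancel₀ (norm_ne_zero_iff.mpr (hhne n))]
      obtain ⟨u₀, hu₀, φ, hφ, hlim⟩ := (isCompact_sphere (0 : ℂ) 1).tendsto_subseq hu1
      have hu₀ne : u₀ ≠ 0 := by
        intro h
        rw [h] at hu₀
        simp at hu₀
      obtain ⟨r, hr⟩ := hline u₀ hu₀ne
      apply hr
      have hnorm_pos : ∀ k, (0:ℝ) < ‖h (φ k)‖ := fun k => norm_pos_iff.mpr (hhne (φ k))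
      set c : ℕ → ℤ := fun k => ⌊r / ‖h (φ k)‖⌋ with hcdef
      have hgH : ∀ k, (c k) • h (φ k) ∈ H := fun k => H.zsmul_mem (hhH (φ k)) _
      have hge : ∀ k, (c k) • h (φ k) = ((c k : ℝ) * ‖h (φ k)‖) • u (φ k) := by
        intro k
        show c k • h (φ k) = ((c k : ℝ) * ‖h (φ k)‖) • (‖h (φ k)‖⁻¹ • h (φ k))
        rw [smul_smul, mul_assoc, mul_inv_cancel₀ (ne_of_gt (hnorm_pos k)), mul_one]
        exact (Int.cast_smul_eq_zsmul ℝ _ _).symm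
      have hscal : Filter.Tendsto (fun k => (c k : ℝ) * ‖h (φ k)‖) Filter.atTop (nhds r) := by
        have hb : ∀ k, |(c k : ℝ) * ‖h (φ k)‖ - r| ≤ 1 / (k + 1) := by
          intro k
          have hd := hnorm_pos k
          have h1 : (c k : ℝ) ≤ r / ‖h (φ k)‖ := Int.floor_le _
          have h2 : r / ‖h (φ k)‖ < (c k : ℝ) + 1 := Int.lt_floor_add_one _
          have hcd : (c k : ℝ) * ‖h (φ k)‖ ≤ r := by
            have := mul_le_mul_of_nonneg_right h1 hd.le
            rwa [div_mul_cancel₀ r (ne_of_gt hd)] at this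
          have hcd2 : r - (c k : ℝ) * ‖h (φ k)‖ < ‖h (φ k)‖ := by
            have := mul_lt_mul_of_pos_right h2 hd
            rw [div_mul_cancel₀ r (ne_of_gt hd)] at this
            nlinarith
          have hdk : ‖h (φ k)‖ ≤ 1 / ((k:ℝ) + 1) := by
            have h4 : k ≤ φ k := StrictMono.le_apply hφ
            have h3 : (k:ℝ) + 1 ≤ (φ k : ℝ) + 1 := by exact_mod_cast by omega
            have := hhn (φ k)
            have h5 : 1 / ((φ k : ℝ) + 1) ≤ 1 / ((k:ℝ)+1) :=
              one_div_le_one_div_of_le (by positivity) h3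
            linarith
          rw [abs_le]
          constructor
          · linarith
          · have : (0:ℝ) < 1 / ((k:ℝ)+1) := by positivity
            linarith
        have h0 : Filter.Tendsto (fun k : ℕ => 1 / ((k:ℝ) + 1)) Filter.atTop (nhds 0) :=
          tendsto_one_div_add_atTop_nhds_zero_nat
        have := squeeze_zero (fun k => abs_nonneg _) hb h0
        rw [← tendsto_sub_nhds_zero_iff]
        exact (tendsto_zero_iff_abs_tendsto_zero _).mpr this
      have hglim : Filter.Tendsto (fun k => (c k) • h (φ k)) Filter.atTop (nhds (r • u₀)) := by
        simp only [hge]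
        exact hscal.smul hlim
      exact hHc.mem_of_tendsto hglim (Filter.Eventually.of_forall (fun k => hgH k))
    obtain ⟨ε, hε, hiso⟩ := hisol
    set L : Submodule ℤ ℂ := AddSubgroup.toIntSubmodule H with hLdef
    have hLco : (L : Set ℂ) = (H : Set ℂ) := rfl
    haveI : DiscreteTopology L := by
      apply discreteTopology_iff_isOpen_singleton_zero.mpr
      have : {(0 : L)} = (fun x : L => (x : ℂ)) ⁻¹' Metric.ball 0 ε := by
        ext x
        simp only [Set.mem_singleton_iff, Set.mem_preimage, Metric.mem_ball, dist_zero_right]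
        constructor
        · intro h; rw [h]; simpa using hε
        · intro h
          exact Subtype.ext (hiso x x.2 h)
      rw [this]
      exact Metric.isOpen_ball.preimage continuous_subtype_val
    by_cases hspan : Submodule.span ℝ (H : Set ℂ) = ⊤
    · haveI : IsZLattice ℝ L := ⟨by rwa [hLco]⟩
      set ι := Module.Free.ChooseBasisIndex ℤ L with hι
      have hcard : Fintype.card ι = 2 := by
        rw [← Module.finrank_eq_card_chooseBasisIndex, ZLattice.rank ℝ L,
          Complex.finrank_real_complex]
      haveI : Nonempty ι := Fintype.card_pos_iff.mp (by omega)
      set b := Module.Free.chooseBasis ℤ L with hb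
      set bR := Module.Basis.ofZLatticeBasis ℝ L b with hbR
      set i₀ : ι := Classical.arbitrary ι
      have hfne : bR.coord i₀ ≠ 0 := by
        intro h
        have := congrFun (congrArg (fun (f : ℂ →ₗ[ℝ] ℝ) => (f : ℂ → ℝ)) h) (bR i₀)
        simp [Module.Basis.coord_apply] at this
      obtain ⟨g, hg, hgn⟩ := hf (bR.coord i₀) hfne
      have hgL : g ∈ Submodule.span ℤ (Set.range bR) := by
        rw [Module.Basis.ofZLatticeBasis_span]
        exact hGH g hg
      rw [Module.Basis.mem_span_iff_repr_mem] at hgL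
      obtain ⟨n, hn⟩ := hgL i₀
      exact hgn n (by rw [Module.Basis.coord_apply, ← hn]; simp)
    · obtain ⟨f, hf0, hker⟩ := Submodule.exists_dual_map_eq_bot_of_lt_top
        (lt_top_iff_ne_top.mpr hspan) inferInstance
      obtain ⟨g, hg, hgn⟩ := hf f hf0
      apply hgn 0
      have : f g ∈ Submodule.map f (Submodule.span ℝ (H : Set ℂ)) :=
        ⟨g, Submodule.subset_span (hGH g hg), rfl⟩
      rw [hker] at this
      simpa using this
theorem stmt_14 (m : ℕ) (hm : 1 ≤ m)
    (B : Matrix (Fin (m + 2)) (Fin (m + 2)) ℤ) (hsymm : B.IsSymm)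
    (hsig : ∃ P : Matrix (Fin (m + 2)) (Fin (m + 2)) ℝ, IsUnit P.det ∧
      P.transpose * (B.map (Int.cast : ℤ → ℝ)) * P =
        Matrix.diagonal (fun i : Fin (m + 2) => if (i : ℕ) < 2 then (1 : ℝ) else -1))
    (t : Fin (m + 2) → ℂ) (ht : t ≠ 0)
    (hiso : ∑ i, ∑ j, t i * (B i j : ℂ) * t j = 0)
    (hpos : ∃ r : ℝ, 0 < r ∧
      ∑ i, ∑ j, t i * (B i j : ℂ) * (starRingEnd ℂ) (t j) = (r : ℂ))
    (hns : ∀ lam : Fin (m + 2) → ℤ,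
      ((fun i => (lam i : ℂ)) ∈
        Submodule.span ℂ {t, fun i => (starRingEnd ℂ) (t i)}) → lam = 0) :
    Dense (Set.range fun z : Fin (m + 2) → ℤ =>
      ∑ i, ∑ j, t i * (B i j : ℂ) * (z j : ℂ)) := by
  classical
  set tb : Fin (m + 2) → ℂ := fun i => (starRingEnd ℂ) (t i) with htb
  set w : Fin (m + 2) → ℂ := fun j => ∑ i, t i * (B i j : ℂ) with hw
  have hfun : (fun z : Fin (m + 2) → ℤ => ∑ i, ∑ j, t i * (B i j : ℂ) * (z j : ℂ))
      = fun z => ∑ j, w j * (z j : ℂ) := by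
    funext z
    rw [Finset.sum_comm]
    refine Finset.sum_congr rfl fun j _ => ?_
    rw [hw, Finset.sum_mul]
  have φadd : ∀ x y : Fin (m + 2) → ℤ,
      (∑ j, w j * ((x + y) j : ℂ)) = (∑ j, w j * (x j : ℂ)) + ∑ j, w j * (y j : ℂ) := by
    intro x y
    rw [← Finset.sum_add_distrib]
    refine Finset.sum_congr rfl fun j _ => ?_
    have h0 : (x + y) j = x j + y j := rfl
    rw [h0]
    push_cast
    ring
  set φ : (Fin (m + 2) → ℤ) →+ ℂ := AddMonoidHom.mk' (fun z => ∑ j, w j * (z j : ℂ)) φadd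
    with hφ
  rw [hfun]
  rw [show (Set.range fun z : Fin (m + 2) → ℤ => ∑ j, w j * (z j : ℂ))
      = (φ.range : Set ℂ) from (AddMonoidHom.coe_range φ).symm]
  apply dense_addSubgroup_complex
  intro f hf0
  by_contra hcon
  push_neg at hcon
  -- the determinant of B is nonzero
  have hdet : B.det ≠ 0 := by
    obtain ⟨P, hP, hPBP⟩ := hsig
    have hD : (Matrix.diagonal fun i : Fin (m + 2) =>
        if (i : ℕ) < 2 then (1 : ℝ) else -1).det ≠ 0 := by
      rw [Matrix.det_diagonal]
      apply Finset.prod_ne_zero_iff.mpr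
      intro i _
      split <;> norm_num
    rw [← hPBP] at hD
    intro h0
    apply hD
    rw [Matrix.det_mul, Matrix.det_mul]
    have h1 : B.map (Int.cast : ℤ → ℝ) = (Int.castRingHom ℝ).mapMatrix B := rfl
    have h2 : (B.map (Int.cast : ℤ → ℝ)).det = ((B.det : ℤ) : ℝ) := by
      rw [h1, ← RingHom.map_det]; rfl
    rw [h2, h0]
    simp
  -- representation of f via a complex number c
  set c : ℂ := ((f 1 : ℝ) : ℂ) - ((f Complex.I : ℝ) : ℂ) * Complex.I with hc
  have hfre : ∀ z : ℂ, f z = (c * z).re := by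
    intro z
    have hz : z = z.re • (1 : ℂ) + z.im • Complex.I := by
      apply Complex.ext <;> simp
    conv_lhs => rw [hz]
    rw [map_add, map_smul, map_smul]
    simp [hc, Complex.mul_re, smul_eq_mul]
    ring
  have hcne : c ≠ 0 := by
    intro h0
    apply hf0
    ext z
    rw [LinearMap.zero_apply, hfre z, h0, zero_mul, Complex.zero_re]
  -- the coefficients are integers
  have hwG : ∀ j, w j ∈ φ.range := by
    intro j
    refine ⟨Pi.single j 1, ?_⟩
    rw [hφ]
    show (∑ k, w k * ((Pi.single j 1 : Fin (m+2) → ℤ) k : ℂ)) = w j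
    rw [Finset.sum_eq_single j]
    · simp
    · intro k _ hk
      rw [Pi.single_eq_of_ne hk]
      simp
    · intro h; exact absurd (Finset.mem_univ j) h
  choose lam hlam using fun j => hcon (w j) (hwG j)
  -- key identity
  have hconjw : ∀ j, (starRingEnd ℂ) (w j) = ∑ i, tb i * (B i j : ℂ) := by
    intro j
    rw [hw]
    show (starRingEnd ℂ) (∑ i, t i * (B i j : ℂ)) = _
    rw [map_sum]
    refine Finset.sum_congr rfl fun i _ => ?_
    rw [map_mul]
    congr 1
    exact map_intCast (starRingEnd ℂ) (B i j)
  have hkey : ∀ j, c * w j + (starRingEnd ℂ) c * (∑ i, tb i * (B i j : ℂ))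
      = 2 * (lam j : ℂ) := by
    intro j
    rw [← hconjw j, ← map_mul]
    rw [Complex.add_conj]
    rw [← hfre (w j), hlam j]
    push_cast
    ring
  -- matrix manipulation
  set Bc : Matrix (Fin (m + 2)) (Fin (m + 2)) ℂ := B.map (Int.cast : ℤ → ℂ) with hBc
  set x : Fin (m + 2) → ℂ := fun i => c * t i + (starRingEnd ℂ) c * tb i with hx
  have hxB : Matrix.vecMul x Bc = fun j => 2 * (lam j : ℂ) := by
    funext j
    show (∑ i, x i * Bc i j) = 2 * (lam j : ℂ)
    have hwj : w j = ∑ i, t i * (B i j : ℂ) := rfl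
    have h1 : ∑ i, x i * Bc i j
        = c * w j + (starRingEnd ℂ) c * ∑ i, tb i * (B i j : ℂ) := by
      rw [hwj, Finset.mul_sum, Finset.mul_sum, ← Finset.sum_add_distrib]
      refine Finset.sum_congr rfl fun i _ => ?_
      rw [hx, hBc]
      show (c * t i + (starRingEnd ℂ) c * tb i) * ((B i j : ℤ) : ℂ) = _
      ring
    rw [h1]
    exact hkey j
  have hdetc : Bc.det = ((B.det : ℤ) : ℂ) := by
    have h1 : Bc = (Int.castRingHom ℂ).mapMatrix B := rfl
    rw [h1, ← RingHom.map_det]; rfl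
  have hadj : Bc.adjugate = (B.adjugate).map (Int.cast : ℤ → ℂ) := by
    have h2 := (Int.castRingHom ℂ).map_adjugate B
    rw [RingHom.mapMatrix_apply, RingHom.mapMatrix_apply, Int.coe_castRingHom] at h2
    exact h2.symm
  have hdx : ∀ k, ((B.det : ℤ) : ℂ) * x k = ∑ j, (2 * (lam j : ℂ)) * ((B.adjugate j k : ℤ) : ℂ) := by
    intro k
    have h1 : Matrix.vecMul x (Bc * Bc.adjugate)
        = Matrix.vecMul (fun j => 2 * (lam j : ℂ)) Bc.adjugate := by
      rw [← Matrix.vecMul_vecMul, hxB]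
    rw [Matrix.mul_adjugate, hdetc] at h1
    have h2 := congrFun h1 k
    have h3 : Matrix.vecMul x (((B.det : ℤ) : ℂ) • (1 : Matrix (Fin (m+2)) (Fin (m+2)) ℂ)) k
        = ((B.det : ℤ) : ℂ) * x k := by
      show (∑ i, x i * (((B.det : ℤ) : ℂ) • (1 : Matrix (Fin (m+2)) (Fin (m+2)) ℂ)) i k) = _
      rw [Finset.sum_eq_single k]
      · simp [Matrix.smul_apply, Matrix.one_apply]; ring
      · intro i _ hik
        simp [Matrix.smul_apply, Matrix.one_apply, hik]
      · intro h; exact absurd (Finset.mem_univ k) h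
    rw [h3] at h2
    rw [h2]
    show (∑ j, (2 * (lam j : ℂ)) * Bc.adjugate j k) = _
    refine Finset.sum_congr rfl fun j _ => ?_
    rw [hadj]
    rfl
  -- the integer vector
  set lam' : Fin (m + 2) → ℤ := fun k => ∑ j, 2 * lam j * B.adjugate j k with hlam'
  have hcast : (fun k => ((lam' k : ℤ) : ℂ)) = fun k => ((B.det : ℤ) : ℂ) * x k := by
    funext k
    rw [hdx k, hlam']
    push_cast
    rfl
  have hmem : (fun k => ((lam' k : ℤ) : ℂ)) ∈ Submodule.span ℂ {t, tb} := by
    rw [hcast]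
    have h1 : (fun k => ((B.det : ℤ) : ℂ) * x k)
        = (((B.det : ℤ) : ℂ) * c) • t + (((B.det : ℤ) : ℂ) * (starRingEnd ℂ) c) • tb := by
      funext k
      simp only [Pi.add_apply, Pi.smul_apply, smul_eq_mul, hx]
      ring
    rw [h1]
    exact Submodule.add_mem _
      (Submodule.smul_mem _ _ (Submodule.subset_span (Set.mem_insert _ _)))
      (Submodule.smul_mem _ _ (Submodule.subset_span (Set.mem_insert_of_mem _ rfl)))
  have hlam0 : lam' = 0 := hns lam' hmem
  have hx0 : ∀ k, x k = 0 := by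
    intro k
    have h1 := congrFun hcast k
    rw [hlam0] at h1
    simp only [Pi.zero_apply, Int.cast_zero] at h1
    rcases mul_eq_zero.mp h1.symm with h2 | h2
    · exact absurd (by exact_mod_cast h2) hdet
    · exact h2
  -- final contradiction
  obtain ⟨r, hr, hsum⟩ := hpos
  have hcc : (starRingEnd ℂ) c ≠ 0 := by
    intro h0
    apply hcne
    simpa using congrArg (starRingEnd ℂ) h0
  have htbj : ∀ j, tb j = -(c / (starRingEnd ℂ) c) * t j := by
    intro j
    have h1 : c * t j + (starRingEnd ℂ) c * tb j = 0 := hx0 j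
    field_simp
    linear_combination h1
  have hzero : ∑ i, ∑ j, t i * (B i j : ℂ) * (starRingEnd ℂ) (t j)
      = -(c / (starRingEnd ℂ) c) * ∑ i, ∑ j, t i * (B i j : ℂ) * t j := by
    rw [Finset.mul_sum]
    refine Finset.sum_congr rfl fun i _ => ?_
    rw [Finset.mul_sum]
    refine Finset.sum_congr rfl fun j _ => ?_
    have : (starRingEnd ℂ) (t j) = tb j := rfl
    rw [this, htbj j]
    ring
  rw [hiso, mul_zero] at hzero
  rw [hzero] at hsum
  have : r = 0 := by exact_mod_cast hsum.symm
  exact absurd this (ne_of_gt hr)
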